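/- Let M be a matroid on a finite ground set E and let e, f ∈ E be distinct elements such that {e, f} is a circuit of M (i.e. e and f are parallel). Then over any field K the basis polynomial of M is obtained from the basis polynomial of the deletion M∖e by substituting x_e + x_f for x_f: ψ_M = φ(ψ_{M∖e}), where φ : K[x_g : g ∈ E ∖ {e}] → K[x_g : g ∈ E] is the K-algebra homomorphism with φ(x_f) = x_e + x_f and φ(x_g) = x_g for all g ∈ E ∖ {e, f}. -/

import Mathlib

/-- A circuit of a matroid is a minimal dependent set. -/
def Matroid.IsCircuit' {α : Type*} (M : Matroid α) (C : Set α) : Prop :=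
  Minimal M.Dep C

open Classical in
/-- The basis polynomial of a matroid `M` on a finite ground type `β` over a
field `K`: the sum, over all bases `B` of `M`, of the monomials
`∏ (g ∈ B) x_g`. -/
noncomputable def basisPoly (K : Type*) [Field K] {β : Type*} [Fintype β]
    [DecidableEq β] (M : Matroid β) : MvPolynomial β K :=
  ∑ B ∈ Finset.univ.filter (fun B : Finset β => M.IsBase ↑B),
    ∏ g ∈ B, MvPolynomial.X g

section aux
variable {α : Type*}

lemma aux_mem_closure (M : Matroid α) {e f : α} (hef : e ≠ f)
    (hpar : Matroid.IsCircuit' M {e, f}) : e ∈ M.closure {f} := by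
  have hdep : M.Dep {e, f} := hpar.1
  have hfE : ({f} : Set α) ⊆ M.E := fun x hx => hdep.subset_ground (by simp at hx; simp [hx])
  have hf : M.Indep {f} := by
    by_contra h
    have h2 : M.Dep {f} := ⟨h, hfE⟩
    have h3 := hpar.2 h2 (by intro x hx; simp at hx; simp [hx])
    exact hef (by simpa using h3 (Set.mem_insert e {f}))
  exact (hf.insert_dep_iff.mp hdep).1

lemma aux_swap (M : Matroid α) {e f : α} {B : Set α} (hcl : e ∈ M.closure {f})
    (hfE : f ∈ M.E) (hB : M.IsBase B) (heB : e ∈ B) (hfB : f ∉ B) :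
    M.IsBase (insert f (B \ {e})) := by
  have hBd : M.Indep (B \ {e}) := hB.indep.subset Set.diff_subset
  have hind : M.Indep (insert f (B \ {e})) := by
    rw [hBd.insert_indep_iff_of_notMem (by simp [hfB])]
    refine ⟨hfE, fun hfcl => ?_⟩
    have hecl : e ∈ M.closure (B \ {e}) :=
      M.closure_subset_closure_of_subset_closure (by simpa using hfcl) hcl
    have hi : M.Indep (insert e (B \ {e})) := by
      rw [Set.insert_diff_singleton, Set.insert_eq_self.2 heB]; exact hB.indep
    rw [hBd.insert_indep_iff_of_notMem (by simp)] at hi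
    exact hi.2 hecl
  exact hB.exchange_isBase_of_indep hfB hind

lemma aux_basis_iff (M : Matroid α) (hE : M.E = Set.univ) {e f : α} (hef : e ≠ f)
    (hcl : e ∈ M.closure {f}) {I : Set α} :
    M.IsBasis I {g | g ≠ e} ↔ M.IsBase I ∧ e ∉ I := by
  have hXE : {g : α | g ≠ e} ⊆ M.E := by rw [hE]; exact Set.subset_univ _
  have hfX : ({f} : Set α) ⊆ {g : α | g ≠ e} := by
    intro x hx; simp at hx; subst hx; exact fun h => hef h.symm
  have hclX : M.closure {g | g ≠ e} = M.E := by
    refine subset_antisymm (M.closure_subset_ground _) ?_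
    rw [hE]
    intro x _
    by_cases hx : x = e
    · subst hx; exact M.closure_subset_closure hfX hcl
    · exact M.subset_closure _ hXE hx
  constructor
  · intro h
    refine ⟨h.indep.isBase_of_spanning ⟨?_, h.indep.subset_ground⟩,
      fun heI => (h.subset heI) rfl⟩
    have h2 : M.E ⊆ M.closure I := by
      rw [← hclX]; exact M.closure_subset_closure_of_subset_closure h.subset_closure
    exact subset_antisymm (M.closure_subset_ground _) h2
  · rintro ⟨hB, heI⟩
    refine hB.indep.isBasis_of_subset_of_subset_closure (fun x hx hxe => heI (hxe ▸ hx)) ?_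
    rw [hB.closure_eq]; exact hXE

open MvPolynomial in
lemma aux_prod_ite (K : Type*) [Field K] [DecidableEq α] (e f : α) (hef : e ≠ f)
    (A : Finset α) (heA : e ∉ A) :
    ∏ x ∈ A, (if x = f then X e + X f else X x : MvPolynomial α K)
      = (∏ x ∈ A, (X x : MvPolynomial α K))
        + (if f ∈ A then ∏ x ∈ insert e (A.erase f), (X x : MvPolynomial α K) else 0) := by
  by_cases hfA : f ∈ A
  · rw [if_pos hfA]
    rw [← Finset.mul_prod_erase A _ hfA, if_pos rfl]
    have h2 : ∏ x ∈ A.erase f, (if x = f then X e + X f else X x : MvPolynomial α K)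
        = ∏ x ∈ A.erase f, (X x : MvPolynomial α K) :=
      Finset.prod_congr rfl (fun x hx => if_neg (Finset.ne_of_mem_erase hx))
    rw [h2, add_mul]
    rw [Finset.prod_insert (fun h => heA (Finset.mem_of_mem_erase h))]
    rw [Finset.mul_prod_erase A _ hfA]
    ring
  · rw [if_neg hfA, add_zero]
    exact Finset.prod_congr rfl fun x hx => if_neg (fun (h : x = f) => hfA (h ▸ hx))

end aux

open MvPolynomial in
theorem stmt_6 {α : Type*} [Fintype α] [DecidableEq α] (K : Type*) [Field K]
    (M : Matroid α) (hE : M.E = Set.univ)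
    (e f : α) (hef : e ≠ f)
    -- `e` and `f` are parallel: `{e, f}` is a circuit of `M`
    (hpar : M.IsCircuit' {e, f})
    -- `φ` is the `K`-algebra homomorphism sending `x_f` to `x_e + x_f` and
    -- fixing all other variables `x_g`, `g ∈ E ∖ {e, f}`
    (φ : MvPolynomial {g : α // g ≠ e} K →ₐ[K] MvPolynomial α K)
    (hφ : φ = MvPolynomial.aeval
      (fun g : {g : α // g ≠ e} =>
        if (g : α) = f then X e + X f else X (g : α))) :
    -- `ψ_M = φ(ψ_{M∖e})`, where `M∖e` is the deletion of `e`, a matroid on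
    -- the ground set `E ∖ {e}`
    basisPoly K M = φ (basisPoly K (M.restrictSubtype {g : α | g ≠ e})) := by
  classical
  subst hφ
  have hcl_ef : e ∈ M.closure {f} := aux_mem_closure M hef hpar
  have hcl_fe : f ∈ M.closure {e} := aux_mem_closure M (Ne.symm hef) (by rwa [Set.pair_comm])
  have hfE : f ∈ M.E := hpar.1.subset_ground (by simp)
  have heE : e ∈ M.E := hpar.1.subset_ground (by simp)
  have hnot_ef : ∀ B : Set α, M.IsBase B → e ∈ B → f ∈ B → False := fun B hB he hf =>
    hpar.1.not_indep (hB.indep.subset (Set.insert_subset he (Set.singleton_subset_iff.2 hf)))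
  -- base condition for the restricted matroid
  have hbase' : ∀ B' : Finset {g : α // g ≠ e},
      (M.restrictSubtype {g : α | g ≠ e}).IsBase (↑B' : Set {g : α // g ≠ e}) ↔
        M.IsBase ↑(B'.map (Function.Embedding.subtype _)) := by
    intro B'
    have hXE : {g : α | g ≠ e} ⊆ M.E := by rw [hE]; exact Set.subset_univ _
    rw [Matroid.restrictSubtype_isBase_iff, Matroid.isBasis'_iff_isBasis hXE,
      aux_basis_iff M hE hef hcl_ef]
    have himg : (↑(B'.map (Function.Embedding.subtype fun g => g ≠ e)) : Set α)
        = Subtype.val '' (↑B' : Set {g : α // g ≠ e}) := by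
      rw [Finset.coe_map]; rfl
    constructor
    · rintro ⟨h1, -⟩
      rw [himg]; exact h1
    · intro h1
      refine ⟨by rw [himg] at h1; exact h1, fun h => ?_⟩
      obtain ⟨b, -, hb⟩ := h
      exact b.2 hb
  -- notation for the three index sets
  set t₁ : Finset (Finset α) :=
    Finset.univ.filter (fun A : Finset α => M.IsBase ↑A ∧ e ∉ A) with ht₁
  set t₂ : Finset (Finset α) :=
    Finset.univ.filter (fun A : Finset α => M.IsBase ↑A ∧ e ∈ A) with ht₂
  set t₃ : Finset (Finset α) :=
    Finset.univ.filter (fun A : Finset α => (M.IsBase ↑A ∧ e ∉ A) ∧ f ∈ A) with ht₃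
  -- Step 1 : RHS as a sum over t₁
  have key1 : (aeval (fun g : {g : α // g ≠ e} =>
        if (g : α) = f then X e + X f else X (g : α)))
        (basisPoly K (M.restrictSubtype {g : α | g ≠ e}))
      = ∑ A ∈ t₁, ∏ x ∈ A,
          (if x = f then X e + X f else X x : MvPolynomial α K) := by
    rw [basisPoly, map_sum]
    simp only [map_prod, aeval_X]
    refine Finset.sum_nbij' (fun B' => B'.map (Function.Embedding.subtype _))
      (fun A => A.subtype (fun g => g ≠ e)) ?_ ?_ ?_ ?_ ?_
    · intro B' hB'
      rw [Finset.mem_filter] at hB' ⊢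
      refine ⟨Finset.mem_univ _, (hbase' B').mp hB'.2, ?_⟩
      exact Finset.notMem_map_subtype_of_not_property B' (fun h => h rfl)
    · intro A hA
      rw [Finset.mem_filter] at hA ⊢
      refine ⟨Finset.mem_univ _, ?_⟩
      have hmap : (A.subtype fun g => g ≠ e).map (Function.Embedding.subtype _) = A :=
        Finset.subtype_map_of_mem (fun x hx hxe => hA.2.2 (hxe ▸ hx))
      rw [hbase', hmap]
      exact hA.2.1
    · intro B' _
      ext b
      simp only [Finset.mem_subtype, Finset.mem_map, Function.Embedding.coe_subtype]
      constructor
      · rintro ⟨a, ha, hab⟩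
        rwa [← Subtype.ext hab]
      · intro hb
        exact ⟨b, hb, rfl⟩
    · intro A hA
      rw [Finset.mem_filter] at hA
      exact Finset.subtype_map_of_mem (fun x hx hxe => hA.2.2 (hxe ▸ hx))
    · intro B' _
      rw [Finset.prod_map]
      rfl
  rw [key1]
  -- Step 2+3 : transform the sum over t₁
  have hs3 : t₁.filter (fun A => f ∈ A) = t₃ := by
    ext A
    simp only [ht₁, ht₃, Finset.filter_filter, Finset.mem_filter, Finset.mem_univ, true_and]
  have key23 : ∑ A ∈ t₁, ∏ x ∈ A,
        (if x = f then X e + X f else X x : MvPolynomial α K)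
      = (∑ A ∈ t₁, ∏ x ∈ A, (X x : MvPolynomial α K))
        + ∑ A ∈ t₃, ∏ x ∈ insert e (A.erase f), (X x : MvPolynomial α K) := by
    rw [Finset.sum_congr rfl (fun A hA => aux_prod_ite K e f hef A
      (by rw [ht₁, Finset.mem_filter] at hA; exact hA.2.2))]
    rw [Finset.sum_add_distrib, ← Finset.sum_filter, hs3]
  rw [key23]
  -- Step 4 : split LHS
  have hs1 : (Finset.univ.filter (fun A : Finset α => M.IsBase ↑A)).filter
      (fun A => ¬ e ∈ A) = t₁ := by
    ext A
    simp only [ht₁, Finset.filter_filter, Finset.mem_filter, Finset.mem_univ, true_and]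
  have hs2 : (Finset.univ.filter (fun A : Finset α => M.IsBase ↑A)).filter
      (fun A => e ∈ A) = t₂ := by
    ext A
    simp only [ht₂, Finset.filter_filter, Finset.mem_filter, Finset.mem_univ, true_and]
  have key4 : basisPoly K M
      = (∑ A ∈ t₁, ∏ x ∈ A, (X x : MvPolynomial α K))
        + ∑ A ∈ t₂, ∏ x ∈ A, (X x : MvPolynomial α K) := by
    rw [basisPoly, ← hs1, ← hs2, add_comm]
    exact (Finset.sum_filter_add_sum_filter_not _ _ _).symm
  rw [key4]
  -- Step 5 : bijection between t₂ and t₃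
  congr 1
  refine Finset.sum_nbij' (fun A => insert f (A.erase e)) (fun A => insert e (A.erase f))
    ?_ ?_ ?_ ?_ ?_
  · intro A hA
    rw [Finset.mem_filter] at hA ⊢
    obtain ⟨-, hAb, heA⟩ := hA
    have hfA : f ∉ A := fun hfA => hnot_ef ↑A hAb heA hfA
    refine ⟨Finset.mem_univ _, ⟨?_, by simp [hef]⟩, Finset.mem_insert_self _ _⟩
    have : ((insert f (A.erase e) : Finset α) : Set α) = insert f ((A : Set α) \ {e}) := by
      simp
    rw [this]
    exact aux_swap M hcl_ef hfE hAb heA (by simpa using hfA)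
  · intro A hA
    rw [Finset.mem_filter] at hA ⊢
    obtain ⟨-, ⟨hAb, heA⟩, hfA⟩ := hA
    refine ⟨Finset.mem_univ _, ?_, Finset.mem_insert_self _ _⟩
    have : ((insert e (A.erase f) : Finset α) : Set α) = insert e ((A : Set α) \ {f}) := by
      simp
    rw [this]
    exact aux_swap M hcl_fe heE hAb hfA (by simpa using heA)
  · intro A hA
    rw [Finset.mem_filter] at hA
    obtain ⟨-, hAb, heA⟩ := hA
    have hfA : f ∉ A := fun hfA => hnot_ef ↑A hAb heA hfA
    show insert e ((insert f (A.erase e)).erase f) = A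
    rw [Finset.erase_insert (fun h => hfA (Finset.mem_of_mem_erase h)),
      Finset.insert_erase heA]
  · intro A hA
    rw [Finset.mem_filter] at hA
    obtain ⟨-, ⟨hAb, heA⟩, hfA⟩ := hA
    show insert f ((insert e (A.erase f)).erase e) = A
    rw [Finset.erase_insert (fun h => heA (Finset.mem_of_mem_erase h)),
      Finset.insert_erase hfA]
  · intro A hA
    rw [Finset.mem_filter] at hA
    obtain ⟨-, hAb, heA⟩ := hA
    have hfA : f ∉ A := fun hfA => hnot_ef ↑A hAb heA hfA
    show (∏ x ∈ A, (X x : MvPolynomial α K))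
      = ∏ x ∈ insert e ((insert f (A.erase e)).erase f), (X x : MvPolynomial α K)
    rw [Finset.erase_insert (fun h => hfA (Finset.mem_of_mem_erase h)),
      Finset.insert_erase heA]
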